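/- Let (ℛ, l) be a planar resonant set with quadratic growth: there is M > 0 with #{θ ∈ ℛ : l(θ) < R} < M·R² for all R > 0. Let ψ : ℝ₊ → ℝ₊ be a decreasing approximation function and f a dimension function such that l ↦ l·f(ψ(l)) is decreasing. If the series Σ_{n≥1} n·f(ψ(n)) converges, then the Hausdorff f-measure of the well-approximable set W(ℛ, ψ) is zero. -/

import Mathlib

open MeasureTheory Real

open Filter Set in
private lemma dyadic_summable {ψ f : ℝ → ℝ}
    (hψpos : ∀ t > (0 : ℝ), 0 < ψ t)
    (hfpos : ∀ r > (0 : ℝ), 0 < f r)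
    (hmono : AntitoneOn (fun t => t * f (ψ t)) (Set.Ioi 0))
    (hconv : Summable fun n : ℕ => (n : ℝ) * f (ψ n)) :
    Summable fun k : ℕ => (4 : ℝ) ^ k * f (ψ ((2 : ℝ) ^ k)) := by
  have hnn : ∀ k : ℕ, 0 ≤ (4 : ℝ) ^ k * f (ψ ((2 : ℝ) ^ k)) := by
    intro k
    have h1 : (0:ℝ) < ψ ((2:ℝ)^k) := hψpos _ (by positivity)
    have := hfpos _ h1
    positivity
  have hannn : ∀ n : ℕ, 0 ≤ (n : ℝ) * f (ψ n) := by
    intro n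
    rcases Nat.eq_zero_or_pos n with h | h
    · simp [h]
    · have h1 : (0:ℝ) < (n:ℝ) := by exact_mod_cast h
      have := hfpos _ (hψpos _ h1)
      positivity
  have key : ∀ k : ℕ, (4 : ℝ) ^ (k + 1) * f (ψ ((2 : ℝ) ^ (k + 1)))
      ≤ 2 * ∑ n ∈ Finset.Ico (2 ^ k : ℕ) (2 ^ (k + 1)), (n : ℝ) * f (ψ n) := by
    intro k
    have hterm : ∀ n ∈ Finset.Ico (2 ^ k : ℕ) (2 ^ (k + 1)),
        (2 : ℝ) ^ (k + 1) * f (ψ ((2 : ℝ) ^ (k + 1))) ≤ (n : ℝ) * f (ψ n) := by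
      intro n hn
      obtain ⟨h1, h2⟩ := Finset.mem_Ico.mp hn
      have hn1 : 1 ≤ n := le_trans (Nat.one_le_two_pow) h1
      have hn0 : (0 : ℝ) < (n : ℝ) := by exact_mod_cast hn1
      have hle : (n : ℝ) ≤ (2 : ℝ) ^ (k + 1) := by
        have : (n : ℝ) ≤ ((2 ^ (k + 1) : ℕ) : ℝ) := by exact_mod_cast h2.le
        simpa [Nat.cast_pow] using this
      exact hmono (Set.mem_Ioi.2 hn0) (Set.mem_Ioi.2 (by positivity)) hle
    have hcard := Finset.card_nsmul_le_sum (Finset.Ico (2 ^ k : ℕ) (2 ^ (k + 1)))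
      (fun n : ℕ => (n : ℝ) * f (ψ n)) _ hterm
    rw [Nat.card_Ico] at hcard
    have hc : 2 ^ (k + 1) - 2 ^ k = 2 ^ k := by
      rw [pow_succ]; omega
    rw [hc, nsmul_eq_mul] at hcard
    push_cast at hcard
    have h4 : (4 : ℝ) ^ (k + 1) = 2 * ((2 : ℝ) ^ k * (2 : ℝ) ^ (k + 1)) := by
      rw [show (4 : ℝ) = 2 * 2 by norm_num, mul_pow]
      ring
    rw [h4, mul_assoc]
    nlinarith [hcard]
  have hblocks : ∀ K : ℕ, ∑ k ∈ Finset.range K,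
      ∑ n ∈ Finset.Ico (2 ^ k : ℕ) (2 ^ (k + 1)), (n : ℝ) * f (ψ n)
      = ∑ n ∈ Finset.Ico (1 : ℕ) (2 ^ K), (n : ℝ) * f (ψ n) := by
    intro K
    induction K with
    | zero => simp
    | succ K ih =>
      rw [Finset.sum_range_succ, ih]
      exact Finset.sum_Ico_consecutive _ Nat.one_le_two_pow
        (Nat.pow_le_pow_right (by norm_num) (Nat.le_succ K))
  have h1 : Summable fun k : ℕ => (4 : ℝ) ^ (k + 1) * f (ψ ((2 : ℝ) ^ (k + 1))) := by
    apply summable_of_sum_range_le (c := 2 * ∑' n : ℕ, (n : ℝ) * f (ψ n)) (fun k => hnn (k+1))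
    intro K
    calc ∑ k ∈ Finset.range K, (4 : ℝ) ^ (k + 1) * f (ψ ((2 : ℝ) ^ (k + 1)))
        ≤ ∑ k ∈ Finset.range K,
            2 * ∑ n ∈ Finset.Ico (2 ^ k : ℕ) (2 ^ (k + 1)), (n : ℝ) * f (ψ n) :=
          Finset.sum_le_sum fun k _ => key k
      _ = 2 * ∑ n ∈ Finset.Ico (1 : ℕ) (2 ^ K), (n : ℝ) * f (ψ n) := by
          rw [← Finset.mul_sum, hblocks K]
      _ ≤ 2 * ∑' n : ℕ, (n : ℝ) * f (ψ n) := by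
          have := Summable.sum_le_tsum (Finset.Ico (1 : ℕ) (2 ^ K)) (fun n _ => hannn n) hconv
          linarith
  exact (summable_nat_add_iff 1).mp h1

open Filter EMetric
open scoped ENNReal

theorem stmt4 (R : Set ℝ) (hRc : R.Countable)
    (hRsub : R ⊆ Set.Ico (-(π / 2)) (π / 2))
    (l : ℝ → ℝ) (hlpos : ∀ θ ∈ R, 0 < l θ)
    (hfin : ∀ L > (0 : ℝ), {θ ∈ R | l θ < L}.Finite)
    (M : ℝ) (hM : 0 < M)
    (hQG : ∀ Rad > (0 : ℝ), (({θ ∈ R | l θ < Rad}).ncard : ℝ) < M * Rad ^ 2)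
    (ψ : ℝ → ℝ) (hψpos : ∀ t > (0 : ℝ), 0 < ψ t) (hψ : Antitone ψ)
    (f : ℝ → ℝ) (hfc : Continuous f) (hfm : Monotone f) (hfpos : ∀ r > (0 : ℝ), 0 < f r)
    (hmono : AntitoneOn (fun t => t * f (ψ t)) (Set.Ioi 0))
    (hconv : Summable fun n : ℕ => (n : ℝ) * f (ψ n)) :
    Measure.mkMetric (fun d => ENNReal.ofReal (f d.toReal))
      (⋂ L ∈ Set.Ioi (0 : ℝ), ⋃ θ ∈ {θ ∈ R | L < l θ}, Metric.ball θ (ψ (l θ))) = 0 := by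
  classical
  set m : ℝ≥0∞ → ℝ≥0∞ := fun d => ENNReal.ofReal (f d.toReal) with hm
  -- the dyadic summable sequence
  have hdy0 : Summable fun k : ℕ => (4 : ℝ) ^ k * f (ψ ((2 : ℝ) ^ k)) :=
    dyadic_summable hψpos hfpos hmono hconv
  have hdy : Summable fun k : ℕ => 16 * M * ((4 : ℝ) ^ k * f (ψ ((2 : ℝ) ^ k))) :=
    hdy0.mul_left _
  have hcrnn : ∀ k : ℕ, 0 ≤ 16 * M * ((4 : ℝ) ^ k * f (ψ ((2 : ℝ) ^ k))) := by
    intro k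
    have h1 := hfpos _ (hψpos ((2:ℝ)^k) (by positivity))
    positivity
  set c : ℕ → ℝ≥0∞ := fun k => ENNReal.ofReal (16 * M * ((4 : ℝ) ^ k * f (ψ ((2 : ℝ) ^ k))))
    with hc
  have hc_ne_top : ∑' k, c k ≠ ∞ := by
    rw [hc, ← ENNReal.ofReal_tsum_of_nonneg hcrnn hdy]
    exact ENNReal.ofReal_ne_top
  have htail : Tendsto (fun K => ∑' j, c (j + K)) atTop (nhds 0) :=
    ENNReal.tendsto_sum_nat_add c hc_ne_top
  -- the sets
  set S : ℕ → Set ℝ := fun K => {θ ∈ R | (2 : ℝ) ^ K < l θ} with hS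
  set A : ℕ → Set ℝ := fun k => {θ ∈ R | (2 : ℝ) ^ k < l θ ∧ l θ ≤ (2 : ℝ) ^ (k + 1)} with hA
  set g : ℝ → ℝ≥0∞ := fun θ => ENNReal.ofReal (f (ψ (l θ))) with hg
  have hAfin : ∀ k, (A k).Finite := by
    intro k
    refine (hfin ((2 : ℝ) ^ (k + 2)) (by positivity)).subset ?_
    rintro θ ⟨h1, _, h3⟩
    refine ⟨h1, lt_of_le_of_lt h3 ?_⟩
    exact pow_lt_pow_right₀ one_lt_two (by omega)
  have hblock : ∀ k, ∑' θ : (A k), g θ ≤ c k := by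
    intro k
    haveI := (hAfin k).fintype
    rw [tsum_fintype]
    have hb : ∀ i : (A k), g i ≤ ENNReal.ofReal (f (ψ ((2 : ℝ) ^ k))) := by
      rintro ⟨θ, hθ⟩
      exact ENNReal.ofReal_le_ofReal (hfm (hψ hθ.2.1.le))
    calc ∑ i : (A k), g i
        ≤ (Finset.univ : Finset (A k)).card • ENNReal.ofReal (f (ψ ((2 : ℝ) ^ k))) :=
          Finset.sum_le_card_nsmul _ _ _ (fun i _ => hb i)
      _ = (Fintype.card (A k) : ℝ≥0∞) * ENNReal.ofReal (f (ψ ((2 : ℝ) ^ k))) := by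
          rw [Finset.card_univ, nsmul_eq_mul]
      _ ≤ ENNReal.ofReal (16 * M * (4 : ℝ) ^ k) * ENNReal.ofReal (f (ψ ((2 : ℝ) ^ k))) := by
          gcongr
          rw [← ENNReal.ofReal_natCast]
          apply ENNReal.ofReal_le_ofReal
          have hsub : A k ⊆ {θ ∈ R | l θ < (2 : ℝ) ^ (k + 2)} := by
            rintro θ ⟨h1, _, h3⟩
            exact ⟨h1, lt_of_le_of_lt h3 (pow_lt_pow_right₀ one_lt_two (by omega))⟩
          have hcard : ((A k).ncard : ℝ) ≤ (({θ ∈ R | l θ < (2 : ℝ) ^ (k + 2)}).ncard : ℝ) := by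
            exact_mod_cast Set.ncard_le_ncard hsub (hfin _ (by positivity))
          have hq := hQG ((2 : ℝ) ^ (k + 2)) (by positivity)
          have hpow : ((2 : ℝ) ^ (k + 2)) ^ 2 = 16 * 4 ^ k := by
            rw [show (4 : ℝ) = 2 * 2 by norm_num, mul_pow]
            ring
          have hnc : (Fintype.card (A k) : ℝ) = ((A k).ncard : ℝ) := by
            rw [Set.ncard_eq_toFinset_card', Set.toFinset_card]
          rw [hnc]
          nlinarith
      _ = c k := by
          rw [← ENNReal.ofReal_mul (by positivity), hc]
          ring_nf
  have hSsub : ∀ K, S K ⊆ ⋃ j : ℕ, A (j + K) := by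
    intro K θ hθ
    obtain ⟨hR, hl⟩ := hθ
    have h1 : (1 : ℝ) < l θ := lt_of_le_of_lt (one_le_pow₀ one_le_two) hl
    have hex : ∃ n : ℕ, l θ ≤ (2 : ℝ) ^ n := by
      obtain ⟨n, hn⟩ := pow_unbounded_of_one_lt (l θ) (one_lt_two (α := ℝ))
      exact ⟨n, hn.le⟩
    have hn : l θ ≤ (2 : ℝ) ^ Nat.find hex := Nat.find_spec hex
    have hn0 : Nat.find hex ≠ 0 := by
      intro h0
      rw [h0, pow_zero] at hn
      linarith
    obtain ⟨p, hp⟩ := Nat.exists_eq_succ_of_ne_zero hn0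
    have hlt : (2 : ℝ) ^ p < l θ := lt_of_not_ge (Nat.find_min hex (by omega))
    have hKp : K ≤ p := by
      by_contra hcon
      push_neg at hcon
      have : (2 : ℝ) ^ (p + 1) ≤ (2 : ℝ) ^ K := pow_le_pow_right₀ one_le_two (by omega)
      rw [hp] at hn
      have h9 : l θ ≤ (2 : ℝ) ^ K := le_trans hn this
      exact absurd h9 (not_le.2 hl)
    refine Set.mem_iUnion.2 ⟨p - K, ?_⟩
    have hpk : p - K + K = p := Nat.sub_add_cancel hKp
    rw [hpk]
    rw [hp] at hn
    exact ⟨hR, hlt, hn⟩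
  have hScount : ∀ K, Countable (S K) := fun K => (hRc.mono (Set.sep_subset _ _)).to_subtype
  have hsum_S : ∀ K, ∑' θ : (S K), g θ ≤ ∑' j, c (j + K) := by
    intro K
    calc ∑' θ : (S K), g θ ≤ ∑' θ : (⋃ j : ℕ, A (j + K)), g θ :=
          ENNReal.tsum_mono_subtype g (hSsub K)
      _ ≤ ∑' j : ℕ, ∑' θ : (A (j + K)), g θ := ENNReal.tsum_iUnion_le_tsum g _
      _ ≤ ∑' j : ℕ, c (j + K) := ENNReal.tsum_le_tsum (fun j => hblock _)
  -- ψ (2^K) → 0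
  have hf0 : Tendsto (fun k : ℕ => f (ψ ((2 : ℝ) ^ k))) atTop (nhds 0) := by
    apply tendsto_of_tendsto_of_tendsto_of_le_of_le tendsto_const_nhds
      hdy0.tendsto_atTop_zero
    · intro k
      exact (hfpos _ (hψpos _ (by positivity))).le
    · intro k
      have h1 : (0:ℝ) ≤ f (ψ ((2 : ℝ) ^ k)) := (hfpos _ (hψpos _ (by positivity))).le
      exact le_mul_of_one_le_left h1 (one_le_pow₀ (by norm_num))
  have hψ0 : Tendsto (fun K : ℕ => ψ ((2 : ℝ) ^ K)) atTop (nhds 0) := by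
    rw [Metric.tendsto_atTop]
    intro ε hε
    have hfe := hfpos ε hε
    obtain ⟨N, hN⟩ := (Metric.tendsto_atTop.1 hf0) (f ε) hfe
    refine ⟨N, fun k hk => ?_⟩
    have h1 := hN k hk
    have h2 : (0:ℝ) < ψ ((2:ℝ)^k) := hψpos _ (by positivity)
    rw [Real.dist_eq, sub_zero, abs_of_pos (hfpos _ h2)] at h1
    rw [Real.dist_eq, sub_zero, abs_of_pos h2]
    by_contra hcon
    push_neg at hcon
    exact absurd (hfm hcon) (not_le.2 h1)
  have hr0 : Tendsto (fun K : ℕ => ENNReal.ofReal (ψ ((2 : ℝ) ^ K))) atTop (nhds 0) := by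
    simpa using ENNReal.tendsto_ofReal (f := atTop) hψ0
  -- the covering
  haveI : ∀ K : ℕ, Countable ((S K) × Bool) := fun K => by
    haveI := hScount K; infer_instance
  set t : ∀ _K : ℕ, (S _K) × Bool → Set ℝ := fun _K p =>
    if p.2 then Set.Ioc (p.1.1 - ψ (l p.1.1)) p.1.1
    else Set.Ico p.1.1 (p.1.1 + ψ (l p.1.1)) with ht0
  have hdiam : ∀ K : ℕ, ∀ i : (S K) × Bool,
      EMetric.diam (t K i) ≤ ENNReal.ofReal (ψ ((2 : ℝ) ^ K)) := by
    rintro K ⟨⟨θ, hθR, hθl⟩, b⟩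
    have hψle : ψ (l θ) ≤ ψ ((2 : ℝ) ^ K) := hψ hθl.le
    cases b
    · show Metric.ediam (Set.Ico θ (θ + ψ (l θ))) ≤ ENNReal.ofReal (ψ ((2 : ℝ) ^ K))
      rw [Real.ediam_Ico, add_sub_cancel_left]
      exact ENNReal.ofReal_le_ofReal hψle
    · show Metric.ediam (Set.Ioc (θ - ψ (l θ)) θ) ≤ ENNReal.ofReal (ψ ((2 : ℝ) ^ K))
      rw [Real.ediam_Ioc, sub_sub_cancel]
      exact ENNReal.ofReal_le_ofReal hψle
  have hcover : ∀ K : ℕ,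
      (⋂ L ∈ Set.Ioi (0 : ℝ), ⋃ θ ∈ {θ ∈ R | L < l θ}, Metric.ball θ (ψ (l θ)))
      ⊆ ⋃ i, t K i := by
    intro K x hx
    have hx2 : x ∈ ⋃ θ ∈ {θ ∈ R | (2 : ℝ) ^ K < l θ}, Metric.ball θ (ψ (l θ)) :=
      Set.mem_iInter₂.1 hx ((2 : ℝ) ^ K) (Set.mem_Ioi.2 (by positivity))
    obtain ⟨θ, hθ, hxb⟩ := Set.mem_iUnion₂.1 hx2
    rw [Real.ball_eq_Ioo] at hxb
    rcases le_total x θ with hle | hle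
    · exact Set.mem_iUnion.2 ⟨(⟨θ, hθ⟩, true), ⟨hxb.1, hle⟩⟩
    · exact Set.mem_iUnion.2 ⟨(⟨θ, hθ⟩, false), ⟨hle, hxb.2⟩⟩
  have hmain := MeasureTheory.Measure.mkMetric_le_liminf_tsum
    (⋂ L ∈ Set.Ioi (0 : ℝ), ⋃ θ ∈ {θ ∈ R | L < l θ}, Metric.ball θ (ψ (l θ)))
    (fun K : ℕ => ENNReal.ofReal (ψ ((2 : ℝ) ^ K))) hr0 t
    (Filter.Eventually.of_forall hdiam) (Filter.Eventually.of_forall hcover) m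
  have hsum_eq : ∀ K : ℕ, ∑' i : (S K) × Bool, m (EMetric.diam (t K i))
      = 2 * ∑' θ : (S K), g θ := by
    intro K
    have hterm : ∀ (θ : (S K)) (b : Bool), m (EMetric.diam (t K (θ, b))) = g θ.1 := by
      rintro ⟨θ, hθR, hθl⟩ b
      have hψ0' : 0 ≤ ψ (l θ) := (hψpos _ (hlpos θ hθR)).le
      cases b
      · show m (Metric.ediam (Set.Ico θ (θ + ψ (l θ)))) = g θ
        rw [Real.ediam_Ico, add_sub_cancel_left]
        show ENNReal.ofReal (f (ENNReal.ofReal (ψ (l θ))).toReal) = g θ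
        rw [ENNReal.toReal_ofReal hψ0']
      · show m (Metric.ediam (Set.Ioc (θ - ψ (l θ)) θ)) = g θ
        rw [Real.ediam_Ioc, sub_sub_cancel]
        show ENNReal.ofReal (f (ENNReal.ofReal (ψ (l θ))).toReal) = g θ
        rw [ENNReal.toReal_ofReal hψ0']
    calc ∑' i : (S K) × Bool, m (EMetric.diam (t K i))
        = ∑' (θ : (S K)) (b : Bool), m (EMetric.diam (t K (θ, b))) := ENNReal.tsum_prod'
      _ = ∑' θ : (S K), (g θ.1 + g θ.1) := by
          refine tsum_congr fun θ => ?_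
          rw [tsum_bool, hterm θ false, hterm θ true]
      _ = ∑' θ : (S K), 2 * g θ.1 := tsum_congr fun θ => (two_mul _).symm
      _ = 2 * ∑' θ : (S K), g θ.1 := ENNReal.tsum_mul_left
  have h2tail : Tendsto (fun K => 2 * ∑' j, c (j + K)) atTop (nhds 0) := by
    have := ENNReal.Tendsto.const_mul (a := 2) htail (Or.inr ENNReal.ofNat_ne_top)
    simpa using this
  refine le_antisymm (le_trans hmain ?_) zero_le
  calc liminf (fun K => ∑' i : (S K) × Bool, m (EMetric.diam (t K i))) atTop
      ≤ liminf (fun K => 2 * ∑' j, c (j + K)) atTop := by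
        refine liminf_le_liminf (Filter.Eventually.of_forall fun K => ?_)
        rw [hsum_eq K]
        exact mul_le_mul_right (hsum_S K) 2
    _ = 0 := h2tail.liminf_eq
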